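/- Let Y be a compactification of the discrete space ℕ, given by an injective map d : ℕ → Y with dense range and each d(n) isolated in Y, with remainder R = Y \ d(ℕ), and let Z₀ = {f ∈ C(Y) : f(y) = 0 for every y ∈ R}, a closed linear subspace of C(Y). If Z₀ is not complemented in C(Y), i.e., there is no bounded linear projection of C(Y) onto Z₀, then there exists a nontrivial twisted sum of c₀ and C(R). -/

import Mathlib

open Cardinal Set Filter Topology

/-- The Banach space `c₀` of real sequences converging to `0`, with the sup norm. -/
abbrev czero : Type := ZeroAtInftyContinuousMap ℕ ℝ

/-- There exists a nontrivial twisted sum of `Y` and `X`: a short exact sequence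
`0 → Y → Z → X → 0` of Banach spaces in which the image of `Y` is not complemented. -/
def ExistsNontrivialTwistedSum (Y X : Type) [NormedAddCommGroup Y] [NormedSpace ℝ Y]
    [NormedAddCommGroup X] [NormedSpace ℝ X] : Prop :=
  ∃ (Z : Type) (_ : NormedAddCommGroup Z) (_ : NormedSpace ℝ Z) (_ : CompleteSpace Z)
    (j : Y →L[ℝ] Z) (q : Z →L[ℝ] X),
      Function.Injective j ∧ IsClosed (Set.range j) ∧ Function.Surjective q ∧
      LinearMap.ker (q : Z →ₗ[ℝ] X) = LinearMap.range (j : Y →ₗ[ℝ] Z) ∧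
      ¬(LinearMap.range (j : Y →ₗ[ℝ] Z)).ClosedComplemented
/-- The canonical copy of `c₀` in `C(Y)`: the continuous functions vanishing at every
point of the remainder `Y \ d(ℕ)`. -/
def Zsub (Y : Type) [TopologicalSpace Y] [CompactSpace Y] (d : ℕ → Y) :
    Submodule ℝ C(Y, ℝ) where
  carrier := {f : C(Y, ℝ) | ∀ y : Y, y ∉ Set.range d → f y = 0}
  add_mem' := fun hf hg y hy => by simp [hf y hy, hg y hy]
  zero_mem' := fun y hy => rfl
  smul_mem' := fun c f hf y hy => by simp [hf y hy]

namespace S11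

variable {Y : Type} [TopologicalSpace Y] [CompactSpace Y] [T2Space Y]
  {d : ℕ → Y}

lemma czero_norm_apply_le (f : czero) (n : ℕ) : ‖f n‖ ≤ ‖f‖ := by
  rw [← ZeroAtInftyContinuousMap.norm_toBCF_eq_norm]
  exact BoundedContinuousFunction.norm_coe_le_norm f.toBCF n

lemma czero_finite (f : czero) {ε : ℝ} (hε : 0 < ε) : {n : ℕ | ε ≤ ‖f n‖}.Finite := by
  have h : Tendsto (⇑f) cofinite (𝓝 0) := by
    have h0 := f.zero_at_infty'
    rwa [cocompact_eq_cofinite] at h0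
  have h2 : ∀ᶠ n in cofinite, ‖f n‖ < ε := by
    simpa [dist_zero_right] using Metric.tendsto_nhds.mp h ε hε
  rw [Filter.eventually_cofinite] at h2
  exact h2.subset fun n hn => by simpa using hn

lemma ext_apply_dn (hinj : Function.Injective d) (f : ℕ → ℝ) (n : ℕ) :
    Function.extend d f 0 (d n) = f n := hinj.extend_apply _ _ _

lemma ext_apply_not (f : ℕ → ℝ) {y : Y} (hy : y ∉ Set.range d) :
    Function.extend d f 0 y = 0 :=
  Function.extend_apply' _ _ _ (by simpa using hy)

lemma cont_ext (hinj : Function.Injective d) (hiso : ∀ n : ℕ, IsOpen ({d n} : Set Y))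
    (f : czero) : Continuous (Function.extend d (⇑f) 0) := by
  rw [continuous_iff_continuousAt]
  intro y
  by_cases hy : y ∈ Set.range d
  · obtain ⟨n, rfl⟩ := hy
    apply Filter.EventuallyEq.continuousAt (y := Function.extend d (⇑f) 0 (d n))
    filter_upwards [(hiso n).mem_nhds rfl] with z hz
    rw [Set.mem_singleton_iff] at hz
    rw [hz]
  · rw [ContinuousAt, ext_apply_not _ hy, Metric.tendsto_nhds]
    intro ε hε
    have hfin : (d '' {n : ℕ | ε ≤ ‖f n‖}).Finite := ((czero_finite f hε).image d)
    have hU : IsOpen (d '' {n : ℕ | ε ≤ ‖f n‖})ᶜ := hfin.isClosed.isOpen_compl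
    have hyU : y ∈ (d '' {n : ℕ | ε ≤ ‖f n‖})ᶜ := fun hc => hy (image_subset_range d _ hc)
    filter_upwards [hU.mem_nhds hyU] with z hz
    by_cases hz2 : z ∈ Set.range d
    · obtain ⟨m, rfl⟩ := hz2
      rw [ext_apply_dn hinj, dist_zero_right]
      by_contra hlt
      exact hz ⟨m, not_lt.mp hlt, rfl⟩
    · rw [ext_apply_not _ hz2, dist_zero_right, norm_zero]; exact hε

noncomputable def jL (hinj : Function.Injective d) (hiso : ∀ n : ℕ, IsOpen ({d n} : Set Y)) :
    czero →L[ℝ] C(Y, ℝ) :=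
  LinearMap.mkContinuous
    { toFun := fun f => ⟨Function.extend d (⇑f) 0, cont_ext hinj hiso f⟩
      map_add' := fun f g => by
        ext y
        by_cases hy : y ∈ Set.range d
        · obtain ⟨n, rfl⟩ := hy
          simp [ext_apply_dn hinj]
        · simp [ext_apply_not _ hy]
      map_smul' := fun c f => by
        ext y
        by_cases hy : y ∈ Set.range d
        · obtain ⟨n, rfl⟩ := hy
          simp [ext_apply_dn hinj]
        · simp [ext_apply_not _ hy] }
    1 (fun f => by
      rw [one_mul]
      refine (ContinuousMap.norm_le _ (norm_nonneg f)).mpr fun y => ?_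
      by_cases hy : y ∈ Set.range d
      · obtain ⟨n, rfl⟩ := hy
        simpa [ext_apply_dn hinj] using czero_norm_apply_le f n
      · simp [ContinuousMap.coe_mk, ext_apply_not (⇑f) hy])

noncomputable def qL (s : Set Y) [CompactSpace s] : C(Y, ℝ) →L[ℝ] C(s, ℝ) :=
  LinearMap.mkContinuous
    { toFun := fun f => f.restrict s
      map_add' := fun f g => rfl
      map_smul' := fun c f => rfl }
    1 (fun f => by
      rw [one_mul]
      refine (ContinuousMap.norm_le _ (norm_nonneg f)).mpr fun x => ?_
      exact f.norm_coe_le_norm x)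

end S11

/-- If the canonical copy of `c₀` in `C(Y)` is not complemented, where `Y` is a
compactification of `ℕ`, then there is a nontrivial twisted sum of `c₀` and `C(R)`,
`R` the remainder of the compactification. -/
theorem statement11 (Y : Type) [TopologicalSpace Y] [CompactSpace Y] [T2Space Y]
    (d : ℕ → Y) (hinj : Function.Injective d) (hdense : DenseRange d)
    (hiso : ∀ n : ℕ, IsOpen ({d n} : Set Y))
    (hnc : ¬(Zsub Y d).ClosedComplemented) :
    haveI : CompactSpace ↥((Set.range d)ᶜ : Set Y) := by
      refine isCompact_iff_compactSpace.mp (IsClosed.isCompact ?_)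
      rw [isClosed_compl_iff, Set.range_eq_iUnion]
      exact isOpen_iUnion hiso
    ExistsNontrivialTwistedSum czero C(((Set.range d)ᶜ : Set Y), ℝ) := by
  haveI : CompactSpace ↥((Set.range d)ᶜ : Set Y) := by
    refine isCompact_iff_compactSpace.mp (IsClosed.isCompact ?_)
    rw [isClosed_compl_iff, Set.range_eq_iUnion]
    exact isOpen_iUnion hiso
  set s : Set Y := (Set.range d)ᶜ with hs
  have hsc : IsClosed s := by
    rw [hs, isClosed_compl_iff, Set.range_eq_iUnion]
    exact isOpen_iUnion hiso
  set j := S11.jL hinj hiso with hj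
  set q := S11.qL (Y := Y) s with hq
  have hjap : ∀ (f : czero) (y : Y), j f y = Function.extend d (⇑f) 0 y := fun f y => rfl
  have hjinj : Function.Injective j := by
    intro f g hfg
    ext n
    have h1 : j f (d n) = j g (d n) := by rw [hfg]
    rw [hjap, hjap, S11.ext_apply_dn hinj, S11.ext_apply_dn hinj] at h1
    exact h1
  have hrange : ∀ f : C(Y, ℝ), f ∈ Set.range j ↔ ∀ y : Y, y ∉ Set.range d → f y = 0 := by
    intro f
    constructor
    · rintro ⟨g, rfl⟩ y hy
      rw [hjap, S11.ext_apply_not _ hy]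
    · intro hf
      have hz : Filter.Tendsto (fun n => f (d n)) (Filter.cocompact ℕ) (𝓝 0) := by
        rw [cocompact_eq_cofinite, Metric.tendsto_nhds]
        intro ε hε
        rw [Filter.eventually_cofinite]
        have hKsub : {y : Y | ε ≤ ‖f y‖} ⊆ ⋃ n, ({d n} : Set Y) := by
          intro y hy
          by_contra hyn
          have hyr : y ∉ Set.range d := by
            rw [Set.range_eq_iUnion]; exact hyn
          have : f y = 0 := hf y hyr
          rw [Set.mem_setOf_eq, this, norm_zero] at hy
          exact absurd hy (not_le.mpr hε)
        have hKcl : IsClosed {y : Y | ε ≤ ‖f y‖} :=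
          isClosed_le continuous_const (map_continuous f).norm
        obtain ⟨t, ht⟩ := hKcl.isCompact.elim_finite_subcover _ hiso hKsub
        have hKfin : {y : Y | ε ≤ ‖f y‖}.Finite :=
          Set.Finite.subset (t.finite_toSet.biUnion fun n _ => Set.finite_singleton (d n)) ht
        have hsub : {n : ℕ | ¬ dist (f (d n)) 0 < ε} ⊆ d ⁻¹' {y : Y | ε ≤ ‖f y‖} := by
          intro n hn
          simpa [dist_zero_right, not_lt] using hn
        exact (hKfin.preimage (hinj.injOn)).subset hsub
      refine ⟨⟨⟨fun n => f (d n), continuous_of_discreteTopology⟩, hz⟩, ?_⟩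
      ext y
      by_cases hy : y ∈ Set.range d
      · obtain ⟨n, rfl⟩ := hy
        rw [hjap, S11.ext_apply_dn hinj]
        rfl
      · rw [hjap, S11.ext_apply_not _ hy, hf y hy]
  have hclset : IsClosed {f : C(Y, ℝ) | ∀ y : Y, y ∉ Set.range d → f y = 0} := by
    have he : {f : C(Y, ℝ) | ∀ y : Y, y ∉ Set.range d → f y = 0} =
        ⋂ y ∈ {y : Y | y ∉ Set.range d}, {f : C(Y, ℝ) | f y = 0} := by
      ext f
      simp
    rw [he]
    exact isClosed_biInter fun y _ =>
      isClosed_eq (continuous_eval_const y) continuous_const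
  have hcl : IsClosed (Set.range ⇑j) := by
    have : Set.range ⇑j = {f : C(Y, ℝ) | ∀ y : Y, y ∉ Set.range d → f y = 0} := by
      ext f
      exact hrange f
    rw [this]
    exact hclset
  have hqsurj : Function.Surjective ⇑q := by
    intro g
    obtain ⟨g', hg'⟩ := ContinuousMap.exists_restrict_eq (Y := ℝ) hsc g
    exact ⟨g', hg'⟩
  have hqap : ∀ f : C(Y, ℝ), q f = f.restrict s := fun f => rfl
  have hker : LinearMap.ker (q : C(Y, ℝ) →ₗ[ℝ] C(s, ℝ)) = LinearMap.range (j : czero →ₗ[ℝ] C(Y, ℝ)) := by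
    ext f
    rw [LinearMap.mem_ker, LinearMap.mem_range]
    constructor
    · intro h0
      have hf : ∀ y : Y, y ∉ Set.range d → f y = 0 := by
        intro y hy
        have hys : y ∈ s := hy
        have := congrArg (fun h : C(s, ℝ) => h ⟨y, hys⟩) h0
        simpa [hqap] using this
      exact (hrange f).mpr hf
    · rintro ⟨g, rfl⟩
      ext x
      have : (j g) (x : Y) = 0 := by
        rw [hjap, S11.ext_apply_not]
        exact x.2
      simpa [hqap] using this
  have hrsub : LinearMap.range (j : czero →ₗ[ℝ] C(Y, ℝ)) = Zsub Y d := by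
    apply SetLike.ext
    intro f
    have h1 : f ∈ LinearMap.range (j : czero →ₗ[ℝ] C(Y, ℝ)) ↔ f ∈ Set.range ⇑j := by
      simp [LinearMap.mem_range, Set.mem_range]
    rw [h1, hrange f]
    exact Iff.rfl
  have hncj : ¬(LinearMap.range (j : czero →ₗ[ℝ] C(Y, ℝ))).ClosedComplemented := by
    rw [hrsub]
    exact hnc
  exact ⟨C(Y, ℝ), inferInstance, inferInstance, inferInstance, j, q,
    hjinj, hcl, hqsurj, hker, hncj⟩
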